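/- Let X ⊆ ℝᵖ, γ₀ ∈ ℝˢ, r > 0, and let h : X × ℝˢ → ℝ be positive with h(x,γ₀) = 1 for all x ∈ X, twice continuously differentiable in γ on the ball B(γ₀,r) for every x ∈ X, and satisfying sup_{x∈X} ‖∇h(x,γ₀)‖ ≤ M₁ < ∞ and sup_{x∈X} sup_{γ∈B(γ₀,r)} ‖h''(x,γ)‖₂ ≤ M₂ < ∞, where ∇h and h'' denote the gradient and Hessian in γ and ‖·‖₂ is the spectral norm. Let L > 0. Then there exist a constant C > 0 and an integer N, depending only on L, M₁, M₂ and r, such that for all n ≥ N, all λ ∈ ℝˢ with ‖λ‖ ≤ L, and all finitely supported designs ξ on X, setting γ₁ = γ₀ + λ/√n, | n·(I₁₂(ξ;γ₁) − 1) − ζ(ξ,λ,γ₀) | ≤ C/√n; in particular sup_ξ | n·(I₁₂(ξ;γ₁) − 1) − ζ(ξ,λ,γ₀) | = O(n^{−1/2}) uniformly over ‖λ‖ ≤ L. -/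

import Mathlib

open scoped BigOperators

private lemma log_quad_aux (u : ℝ) (hu : |u| ≤ 1/2) :
    |Real.log (1 + u) - (u - u^2/2)| ≤ 2 * |u|^3 := by
  have hau : 0 ≤ |u| := abs_nonneg u
  have h1 : |(-u)| < 1 := by rw [abs_neg]; linarith
  have h2 := Real.abs_log_sub_add_sum_range_le h1 2
  have hs : (∑ i ∈ Finset.range 2, (-u) ^ (i+1) / ((i:ℝ)+1)) = -u + u^2/2 := by
    simp [Finset.sum_range_succ]
    ring
  rw [hs, abs_neg, show (1:ℝ) - -u = 1 + u from by ring] at h2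
  have h4 : |u|^3 / (1 - |u|) ≤ 2 * |u|^3 := by
    rw [div_le_iff₀ (by linarith)]
    nlinarith [pow_nonneg hau 3]
  calc |Real.log (1+u) - (u - u^2/2)|
      = |(-u + u^2/2) + Real.log (1+u)| := by ring_nf
    _ ≤ |u|^3 / (1 - |u|) := h2
    _ ≤ 2*|u|^3 := h4

private lemma taylor_quad_aux {s : ℕ} (f : EuclideanSpace ℝ (Fin s) → ℝ)
    (γ₀ : EuclideanSpace ℝ (Fin s)) (r : ℝ) (hr : 0 < r)
    (hf : ContDiffOn ℝ 2 f (Metric.ball γ₀ r)) (M : ℝ)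
    (hM : ∀ γ ∈ Metric.ball γ₀ r, ‖fderiv ℝ (fun γ' => fderiv ℝ f γ') γ‖ ≤ M)
    (γ₁ : EuclideanSpace ℝ (Fin s)) (hγ₁ : γ₁ ∈ Metric.ball γ₀ r) :
    |f γ₁ - f γ₀ - fderiv ℝ f γ₀ (γ₁ - γ₀)| ≤ M * ‖γ₁ - γ₀‖^2 := by
  have hop : IsOpen (Metric.ball γ₀ r) := Metric.isOpen_ball
  have hconv : Convex ℝ (Metric.ball γ₀ r) := convex_ball γ₀ r
  have h0mem : γ₀ ∈ Metric.ball γ₀ r := Metric.mem_ball_self hr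
  have hM0 : 0 ≤ M := le_trans (ContinuousLinearMap.opNorm_nonneg _) (hM γ₀ h0mem)
  have hdiff : DifferentiableOn ℝ f (Metric.ball γ₀ r) :=
    hf.differentiableOn (by norm_num)
  have hfd : ∀ γ ∈ Metric.ball γ₀ r, HasFDerivAt f (fderiv ℝ f γ) γ := fun γ hγ =>
    ((hdiff γ hγ).differentiableAt (hop.mem_nhds hγ)).hasFDerivAt
  have hD : DifferentiableOn ℝ (fun γ => fderiv ℝ f γ) (Metric.ball γ₀ r) :=
    (hf.fderiv_of_isOpen (m := 1) hop (by norm_num)).differentiableOn one_ne_zero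
  have lip : ∀ γ ∈ Metric.ball γ₀ r, ‖fderiv ℝ f γ - fderiv ℝ f γ₀‖ ≤ M * ‖γ - γ₀‖ := by
    intro γ hγ
    exact hconv.norm_image_sub_le_of_norm_hasFDerivWithin_le
      (fun γ' hγ' => (((hD γ' hγ').differentiableAt (hop.mem_nhds hγ')).hasFDerivAt).hasFDerivWithinAt)
      hM h0mem hγ
  -- second-order bound via MVT on an auxiliary set
  set ρ : ℝ := ‖γ₁ - γ₀‖ with hρdef
  have hρ0 : 0 ≤ ρ := norm_nonneg _
  set T : Set (EuclideanSpace ℝ (Fin s)) := Metric.closedBall γ₀ ρ ∩ Metric.ball γ₀ r with hTdef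
  have hTconv : Convex ℝ T := (convex_closedBall γ₀ ρ).inter (convex_ball γ₀ r)
  have hT0 : γ₀ ∈ T := ⟨Metric.mem_closedBall_self hρ0, h0mem⟩
  have hT1 : γ₁ ∈ T := ⟨by simp [Metric.mem_closedBall, dist_eq_norm, hρdef], hγ₁⟩
  set g : EuclideanSpace ℝ (Fin s) → ℝ := fun γ => f γ - fderiv ℝ f γ₀ (γ - γ₀) with hgdef
  have hgd : ∀ γ ∈ T, HasFDerivWithinAt g (fderiv ℝ f γ - fderiv ℝ f γ₀) T γ := by
    intro γ hγ
    have h1 : HasFDerivAt (fun γ' => fderiv ℝ f γ₀ (γ' - γ₀)) (fderiv ℝ f γ₀) γ := by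
      have h2 := (fderiv ℝ f γ₀).hasFDerivAt.comp γ ((hasFDerivAt_id γ).sub_const γ₀)
      simpa [Function.comp_def] using h2
    exact (((hfd γ hγ.2).sub h1).hasFDerivWithinAt)
  have hbound : ∀ γ ∈ T, ‖fderiv ℝ f γ - fderiv ℝ f γ₀‖ ≤ M * ρ := by
    intro γ hγ
    exact (lip γ hγ.2).trans (mul_le_mul_of_nonneg_left (by simpa [dist_eq_norm] using hγ.1) hM0)
  have hmvt := hTconv.norm_image_sub_le_of_norm_hasFDerivWithin_le hgd hbound hT0 hT1
  have hg0 : g γ₀ = f γ₀ := by simp [hgdef]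
  have hg1 : g γ₁ = f γ₁ - fderiv ℝ f γ₀ (γ₁ - γ₀) := rfl
  rw [hg1, hg0] at hmvt
  calc |f γ₁ - f γ₀ - fderiv ℝ f γ₀ (γ₁ - γ₀)|
      = ‖(f γ₁ - fderiv ℝ f γ₀ (γ₁ - γ₀)) - f γ₀‖ := by rw [Real.norm_eq_abs]; ring_nf
    _ ≤ M * ρ * ‖γ₁ - γ₀‖ := hmvt
    _ = M * ‖γ₁ - γ₀‖^2 := by rw [hρdef]; ring

private lemma wsum_abs_le {k : ℕ} (w a : Fin k → ℝ) (hw : ∀ i, 0 ≤ w i)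
    (hw1 : ∑ i, w i = 1) (B : ℝ) (hB : ∀ i, |a i| ≤ B) :
    |∑ i, w i * a i| ≤ B := by
  calc |∑ i, w i * a i| ≤ ∑ i, |w i * a i| := Finset.abs_sum_le_sum_abs _ _
    _ = ∑ i, w i * |a i| := by
        refine Finset.sum_congr rfl fun i _ => ?_
        rw [abs_mul, abs_of_nonneg (hw i)]
    _ ≤ ∑ i, w i * B := Finset.sum_le_sum fun i _ =>
        mul_le_mul_of_nonneg_left (hB i) (hw i)
    _ = B := by rw [← Finset.sum_mul, hw1, one_mul]

set_option maxHeartbeats 4000000 in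
/-- Uniform approximation of the KL-criterion by the noncentrality parameter:
sup over designs ξ of |n(I₁₂(ξ;γ₀+λ/√n) - 1) - ζ(ξ,λ,γ₀)| ≤ C/√n, uniformly
over ‖λ‖ ≤ L, with C and N depending only on L, M₁, M₂ and r. -/
theorem stmt_9 (p s : ℕ) (X : Set (Fin p → ℝ))
    (γ₀ : EuclideanSpace ℝ (Fin s)) (r : ℝ) (hr : 0 < r)
    (h : (Fin p → ℝ) → EuclideanSpace ℝ (Fin s) → ℝ)
    (hpos : ∀ x ∈ X, ∀ γ, 0 < h x γ)
    (hone : ∀ x ∈ X, h x γ₀ = 1)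
    (hsmooth : ∀ x ∈ X, ContDiffOn ℝ 2 (h x) (Metric.ball γ₀ r))
    (M₁ M₂ L : ℝ) (hL : 0 < L)
    (hM₁ : ∀ x ∈ X, ‖fderiv ℝ (h x) γ₀‖ ≤ M₁)
    (hM₂ : ∀ x ∈ X, ∀ γ ∈ Metric.ball γ₀ r, ‖fderiv ℝ (fun γ' => fderiv ℝ (h x) γ') γ‖ ≤ M₂) :
    ∃ C > 0, ∃ N : ℕ, ∀ n : ℕ, N ≤ n →
      ∀ lam : EuclideanSpace ℝ (Fin s), ‖lam‖ ≤ L →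
      ∀ (k : ℕ) (x : Fin k → (Fin p → ℝ)), (∀ i, x i ∈ X) →
      ∀ w : Fin k → ℝ, (∀ i, 0 ≤ w i) → ∑ i, w i = 1 →
      |(n : ℝ) * ((1 + Real.log (∑ i, w i * h (x i) (γ₀ + (Real.sqrt n)⁻¹ • lam))
            - ∑ i, w i * Real.log (h (x i) (γ₀ + (Real.sqrt n)⁻¹ • lam))) - 1)
        - (1 / 2) * ((∑ i, w i * (fderiv ℝ (h (x i)) γ₀ lam) ^ 2)
            - (∑ i, w i * fderiv ℝ (h (x i)) γ₀ lam) ^ 2)|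
      ≤ C / Real.sqrt n := by
  set M1 : ℝ := max M₁ 0 with hM1def
  set M2 : ℝ := max M₂ 0 with hM2def
  have hM1n : 0 ≤ M1 := le_max_right _ _
  have hM2n : 0 ≤ M2 := le_max_right _ _
  have hM1b : M₁ ≤ M1 := le_max_left _ _
  have hM2b : M₂ ≤ M2 := le_max_left _ _
  clear_value M1 M2
  set K : ℝ := M1 * L + M2 * L^2 with hKdef
  have hKn : 0 ≤ K := add_nonneg (mul_nonneg hM1n hL.le) (mul_nonneg hM2n (sq_nonneg L))
  clear_value K
  set C : ℝ := 2*M2*L^2*K + 4*K^3 + 1 with hCdef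
  clear_value C
  have hC : 0 < C := by
    have h1 : 0 ≤ 2*M2*L^2*K :=
      mul_nonneg (mul_nonneg (mul_nonneg (by norm_num) hM2n) (sq_nonneg L)) hKn
    have h2 : 0 ≤ 4*K^3 := by
      have := pow_nonneg hKn 3
      linarith only [this]
    rw [hCdef]
    linarith only [h1, h2]
  refine ⟨C, hC, ⌈(2*K + L/r + 1)^2⌉₊ + 1, ?_⟩
  intro n hn lam hlam k x hx w hw hw1
  have hLr : 0 < L / r := div_pos hL hr
  have hbase : (0:ℝ) < 2*K + L/r + 1 := by linarith only [hKn, hLr]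
  have hnceil : (⌈(2*K + L/r + 1)^2⌉₊ : ℝ) ≤ n := by
    exact_mod_cast (Nat.le_succ _).trans hn
  have hsqn : 2*K + L/r + 1 ≤ Real.sqrt n := by
    calc 2*K + L/r + 1 = Real.sqrt ((2*K + L/r + 1)^2) := (Real.sqrt_sq hbase.le).symm
      _ ≤ Real.sqrt n := Real.sqrt_le_sqrt ((Nat.le_ceil _).trans hnceil)
  have hsqpos : 0 < Real.sqrt n := hbase.trans_le hsqn
  set t : ℝ := (Real.sqrt n)⁻¹ with htdef
  have ht0 : 0 < t := inv_pos.2 hsqpos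
  have htmul : t * (2*K + L/r + 1) ≤ 1 := by
    rw [htdef, inv_mul_le_iff₀ hsqpos]
    simpa using hsqn
  have hCt : C / Real.sqrt n = C * t := by rw [htdef]; exact div_eq_mul_inv C _
  have ht1 : t ≤ 1 := by
    linarith only [htmul, mul_nonneg ht0.le hKn, mul_nonneg ht0.le hLr.le]
  have htK : t * K ≤ 1/2 := by
    linarith only [htmul, mul_nonneg ht0.le hLr.le, ht0.le]
  have htLr : t * L < r := by
    have h1 : t * (L/r) < 1 := by
      linarith only [htmul, mul_nonneg ht0.le hKn, ht0]
    have h2 : t * L = (t * (L/r)) * r := by field_simp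
    have h3 := mul_lt_mul_of_pos_right h1 hr
    rw [one_mul] at h3
    linarith only [h2, h3]
  have hnt2 : (n:ℝ) * t^2 = 1 := by
    have hs2 : Real.sqrt n ^ 2 = (n:ℝ) := Real.sq_sqrt (Nat.cast_nonneg n)
    have ht2 : t^2 = (Real.sqrt n ^ 2)⁻¹ := by rw [htdef, inv_pow]
    have hnpos : (0:ℝ) < (n:ℝ) := by rw [← hs2]; positivity
    rw [ht2, hs2]
    exact mul_inv_cancel₀ hnpos.ne'
  have hnt3 : (n:ℝ) * t^3 = t := by linear_combination t * hnt2
  clear_value t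
  set γ₁ : EuclideanSpace ℝ (Fin s) := γ₀ + t • lam with hγ₁def
  have hγ₁sub : γ₁ - γ₀ = t • lam := by rw [hγ₁def]; abel
  have hγ₁norm : ‖γ₁ - γ₀‖ = t * ‖lam‖ := by
    rw [hγ₁sub, norm_smul, Real.norm_eq_abs, abs_of_pos ht0]
  have hball : γ₁ ∈ Metric.ball γ₀ r := by
    rw [Metric.mem_ball, dist_eq_norm, hγ₁norm]
    calc t * ‖lam‖ ≤ t * L := mul_le_mul_of_nonneg_left hlam ht0.le
      _ < r := htLr
  clear_value γ₁
  set u : Fin k → ℝ := fun i => h (x i) γ₁ - 1 with hudef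
  set d : Fin k → ℝ := fun i => fderiv ℝ (h (x i)) γ₀ lam with hddef
  clear_value u d
  -- Taylor bound per point
  have htay : ∀ i, |u i - t * d i| ≤ M2 * (t*L)^2 := by
    intro i
    have h1 := taylor_quad_aux (h (x i)) γ₀ r hr (hsmooth _ (hx i)) M2
      (fun γ hγ => le_trans (hM₂ _ (hx i) γ hγ) hM2b) γ₁ hball
    have h2 : fderiv ℝ (h (x i)) γ₀ (γ₁ - γ₀) = t * d i := by
      rw [hγ₁sub, map_smul]; simp [hddef]
    rw [hone _ (hx i), h2, hγ₁norm] at h1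
    simp only [hudef]
    have h3 : M2 * (t * ‖lam‖)^2 ≤ M2 * (t*L)^2 := by
      have : t * ‖lam‖ ≤ t * L := mul_le_mul_of_nonneg_left hlam ht0.le
      have h4 : (t*‖lam‖)^2 ≤ (t*L)^2 := by
        apply pow_le_pow_left₀ (mul_nonneg ht0.le (norm_nonneg _)) this
      exact mul_le_mul_of_nonneg_left h4 hM2n
    exact (le_trans h1 h3)
  have hd : ∀ i, |d i| ≤ M1 * L := by
    intro i
    have h1 : |d i| ≤ ‖fderiv ℝ (h (x i)) γ₀‖ * ‖lam‖ := by
      rw [hddef, ← Real.norm_eq_abs]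
      exact (fderiv ℝ (h (x i)) γ₀).le_opNorm lam
    calc |d i| ≤ ‖fderiv ℝ (h (x i)) γ₀‖ * ‖lam‖ := h1
      _ ≤ M1 * L := mul_le_mul ((hM₁ _ (hx i)).trans hM1b) hlam
          (norm_nonneg _) hM1n
  have hML_K : M1 * L ≤ K := by
    rw [hKdef]
    linarith only [mul_nonneg hM2n (sq_nonneg L)]
  have hu : ∀ i, |u i| ≤ t * K := by
    intro i
    have h1 := htay i
    have h2 := hd i
    have h3 : |u i| ≤ |u i - t * d i| + |t * d i| := by
      calc |u i| = |(u i - t * d i) + t * d i| := by ring_nf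
        _ ≤ _ := abs_add_le _ _
    have h4 : |t * d i| = t * |d i| := by rw [abs_mul, abs_of_pos ht0]
    have h5 : M2 * (t*L)^2 ≤ t * (M2 * L^2) := by
      linarith only [mul_nonneg (mul_nonneg (mul_nonneg hM2n (sq_nonneg L)) ht0.le)
        (sub_nonneg.2 ht1)]
    rw [h4] at h3
    rw [hKdef]
    linarith only [h1, h3, h5, mul_le_mul_of_nonneg_left h2 ht0.le]
  have huhalf : ∀ i, |u i| ≤ 1/2 := fun i => (hu i).trans htK
  set ubar : ℝ := ∑ i, w i * u i with hubardef
  set A : ℝ := ∑ i, w i * d i with hAdef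
  clear_value ubar A
  have hubar : |ubar| ≤ t * K := by rw [hubardef]; exact wsum_abs_le w u hw hw1 _ hu
  have hubarhalf : |ubar| ≤ 1/2 := hubar.trans htK
  have hA : |A| ≤ M1 * L := by rw [hAdef]; exact wsum_abs_le w d hw hw1 _ hd
  have hubartA : |ubar - t * A| ≤ M2 * (t*L)^2 := by
    have h1 : ubar - t * A = ∑ i, w i * (u i - t * d i) := by
      rw [hubardef, hAdef, Finset.mul_sum, ← Finset.sum_sub_distrib]
      exact Finset.sum_congr rfl fun i _ => by ring
    rw [h1]
    exact wsum_abs_le w _ hw hw1 _ htay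
  -- log expansions
  set e0 : ℝ := Real.log (1 + ubar) - (ubar - ubar^2/2) with he0def
  set e : Fin k → ℝ := fun i => Real.log (1 + u i) - (u i - (u i)^2/2) with hedef
  clear_value e0 e
  have he0 : |e0| ≤ 2*(t*K)^3 := by
    rw [he0def]
    have h1 := log_quad_aux ubar hubarhalf
    have h2 : |ubar|^3 ≤ (t*K)^3 := pow_le_pow_left₀ (abs_nonneg _) hubar 3
    calc |Real.log (1 + ubar) - (ubar - ubar^2/2)| ≤ 2*|ubar|^3 := h1
      _ ≤ 2*(t*K)^3 := by linarith only [h2]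
  have he : ∀ i, |e i| ≤ 2*(t*K)^3 := by
    intro i
    simp only [hedef]
    have h1 := log_quad_aux (u i) (huhalf i)
    have h2 : |u i|^3 ≤ (t*K)^3 := pow_le_pow_left₀ (abs_nonneg _) (hu i) 3
    calc |Real.log (1 + u i) - (u i - (u i)^2/2)| ≤ 2*|u i|^3 := h1
      _ ≤ 2*(t*K)^3 := by linarith only [h2]
  -- rewriting the goal sums
  have hS : ∑ i, w i * h (x i) γ₁ = 1 + ubar := by
    rw [hubardef, ← hw1, ← Finset.sum_add_distrib]
    exact Finset.sum_congr rfl fun i _ => by simp [hudef]; ring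
  have hlogs : ∑ i, w i * Real.log (h (x i) γ₁)
      = (∑ i, w i * e i) + ubar - (∑ i, w i * (u i)^2)/2 := by
    have h1 : ∀ i, w i * Real.log (h (x i) γ₁)
        = w i * e i + w i * u i - w i * (u i)^2/2 := by
      intro i
      have h2 : h (x i) γ₁ = 1 + u i := by simp [hudef]
      rw [h2, hedef]; ring
    rw [Finset.sum_congr rfl fun i _ => h1 i, Finset.sum_sub_distrib,
      Finset.sum_add_distrib, ← Finset.sum_div, hubardef]
  have hlog1 : Real.log (1 + ubar) = e0 + (ubar - ubar^2/2) := by rw [he0def]; ring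
  rw [hS, hlogs, hlog1]
  -- quadratic sum bounds
  have hQbound : |(n:ℝ) * (∑ i, w i * (u i)^2) - ∑ i, w i * (d i)^2| ≤ 2*M2*L^2*K*t := by
    have h1 : (n:ℝ) * (∑ i, w i * (u i)^2) - ∑ i, w i * (d i)^2
        = ∑ i, w i * ((n:ℝ) * (u i)^2 - (d i)^2) := by
      rw [Finset.mul_sum, ← Finset.sum_sub_distrib]
      exact Finset.sum_congr rfl fun i _ => by ring
    rw [h1]
    refine wsum_abs_le w _ hw hw1 _ ?_
    intro i
    have h2 : (n:ℝ) * (u i)^2 - (d i)^2 = (n:ℝ) * ((u i - t * d i) * (u i + t * d i)) := by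
      linear_combination (d i)^2 * hnt2
    have h3 : |u i + t * d i| ≤ 2*(t*K) := by
      have h4 := abs_add_le (u i) (t * d i)
      have h5 : |t * d i| = t * |d i| := by rw [abs_mul, abs_of_pos ht0]
      have h6 := mul_le_mul_of_nonneg_left ((hd i).trans hML_K) ht0.le
      have h7 := hu i
      rw [h5] at h4
      linarith
    rw [h2, abs_mul, abs_mul, Nat.abs_cast]
    calc (n:ℝ) * (|u i - t * d i| * |u i + t * d i|)
        ≤ (n:ℝ) * ((M2 * (t*L)^2) * (2*(t*K))) := by
          have hn0 : (0:ℝ) ≤ n := Nat.cast_nonneg n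
          have := mul_le_mul (htay i) h3 (abs_nonneg _) (mul_nonneg hM2n (sq_nonneg _))
          exact mul_le_mul_of_nonneg_left this hn0
      _ = 2*M2*L^2*K*t := by linear_combination (2*M2*L^2*K*t) * hnt2
  have hUbound : |(n:ℝ) * ubar^2 - A^2| ≤ 2*M2*L^2*K*t := by
    have h2 : (n:ℝ) * ubar^2 - A^2 = (n:ℝ) * ((ubar - t * A) * (ubar + t * A)) := by
      linear_combination A^2 * hnt2
    have h3 : |ubar + t * A| ≤ 2*(t*K) := by
      have h4 := abs_add_le ubar (t * A)
      have h5 : |t * A| = t * |A| := by rw [abs_mul, abs_of_pos ht0]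
      have h6 := mul_le_mul_of_nonneg_left (hA.trans hML_K) ht0.le
      rw [h5] at h4
      linarith
    rw [h2, abs_mul, abs_mul, Nat.abs_cast]
    calc (n:ℝ) * (|ubar - t * A| * |ubar + t * A|)
        ≤ (n:ℝ) * ((M2 * (t*L)^2) * (2*(t*K))) := by
          have hn0 : (0:ℝ) ≤ n := Nat.cast_nonneg n
          have := mul_le_mul hubartA h3 (abs_nonneg _) (mul_nonneg hM2n (sq_nonneg _))
          exact mul_le_mul_of_nonneg_left this hn0
      _ = 2*M2*L^2*K*t := by linear_combination (2*M2*L^2*K*t) * hnt2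
  have hEb : |∑ i, w i * e i| ≤ 2*(t*K)^3 := wsum_abs_le w e hw hw1 _ he
  have hne0 : |(n:ℝ) * e0| ≤ 2*K^3*t := by
    rw [abs_mul, Nat.abs_cast]
    calc (n:ℝ) * |e0| ≤ (n:ℝ) * (2*(t*K)^3) :=
        mul_le_mul_of_nonneg_left he0 (Nat.cast_nonneg n)
      _ = 2*K^3*t := by linear_combination (2*K^3*t) * hnt2
  have hnEb : |(n:ℝ) * ∑ i, w i * e i| ≤ 2*K^3*t := by
    rw [abs_mul, Nat.abs_cast]
    calc (n:ℝ) * |∑ i, w i * e i| ≤ (n:ℝ) * (2*(t*K)^3) :=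
        mul_le_mul_of_nonneg_left hEb (Nat.cast_nonneg n)
      _ = 2*K^3*t := by linear_combination (2*K^3*t) * hnt2
  -- final assembly
  have hkey : (n:ℝ) * ((1 + (e0 + (ubar - ubar^2/2))
        - ((∑ i, w i * e i) + ubar - (∑ i, w i * (u i)^2)/2)) - 1)
      - (1/2) * ((∑ i, w i * (d i)^2) - A^2)
      = (n:ℝ)*e0 - (n:ℝ)*(∑ i, w i * e i)
        + (1/2)*((n:ℝ) * (∑ i, w i * (u i)^2) - ∑ i, w i * (d i)^2)
        - (1/2)*((n:ℝ) * ubar^2 - A^2) := by ring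
  have hQd : ∑ i, w i * (fderiv ℝ (h (x i)) γ₀ lam) ^ 2 = ∑ i, w i * (d i)^2 :=
    Finset.sum_congr rfl fun i _ => by simp only [hddef]
  have hAg : (∑ i, w i * fderiv ℝ (h (x i)) γ₀ lam) = A := by
    rw [hAdef]
    exact Finset.sum_congr rfl fun i _ => by simp only [hddef]
  rw [hQd, hAg, hkey, hCt]
  have hb1 := abs_le.1 hne0
  have hb2 := abs_le.1 hnEb
  have hb3 := abs_le.1 hQbound
  have hb4 := abs_le.1 hUbound
  have hsum : 2*K^3*t + 2*K^3*t + (1/2)*(2*M2*L^2*K*t) + (1/2)*(2*M2*L^2*K*t) ≤ C*t := by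
    have h9 : (2*M2*L^2*K + 4*K^3 + 1)*t
        - (2*K^3*t + 2*K^3*t + (1/2)*(2*M2*L^2*K*t) + (1/2)*(2*M2*L^2*K*t)) = t := by ring
    rw [hCdef]
    linarith only [ht0.le, h9]
  rw [abs_le]
  constructor
  · linarith only [hb1.1, hb2.2, hb3.1, hb4.2, hsum]
  · linarith only [hb1.2, hb2.1, hb3.2, hb4.1, hsum]
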